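/- For any c > 0 and L̄ > 1, the function σ ↦ (1 - e^{-cσ}) + c(1-σ)e^{-cσ} - (c/L̄)e^{-cσ} on [0,1] attains its minimum at σ = 1 - 1/L̄, and the minimum value is 1 - e^{-c(1 - 1/L̄)}. -/

import Mathlib

open Real

theorem stmt4 (c Lb : ℝ) (hc : 0 < c) (hL : 1 < Lb) :
    IsMinOn (fun σ : ℝ => (1 - Real.exp (-c * σ)) + c * (1 - σ) * Real.exp (-c * σ) -
        (c / Lb) * Real.exp (-c * σ)) (Set.Icc 0 1) (1 - 1 / Lb) ∧
    (1 - Real.exp (-c * (1 - 1 / Lb))) + c * (1 - (1 - 1 / Lb)) * Real.exp (-c * (1 - 1 / Lb)) -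
        (c / Lb) * Real.exp (-c * (1 - 1 / Lb)) = 1 - Real.exp (-c * (1 - 1 / Lb)) := by
  have hLb : (0:ℝ) < Lb := lt_trans one_pos hL
  constructor
  · intro x _
    simp only [Set.mem_setOf_eq]
    set s : ℝ := 1 - 1 / Lb with hs
    have key : -(c * (s - x)) + 1 ≤ Real.exp (-(c * (s - x))) := Real.add_one_le_exp _
    have hpos : 0 < Real.exp (-c * x) := Real.exp_pos _
    have hmul : Real.exp (-c * x) * Real.exp (-(c * (s - x))) = Real.exp (-c * s) := by
      rw [← Real.exp_add]; ring_nf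
    have h2 : Real.exp (-c * x) * (-(c * (s - x)) + 1) ≤ Real.exp (-c * s) := by
      calc Real.exp (-c * x) * (-(c * (s - x)) + 1)
          ≤ Real.exp (-c * x) * Real.exp (-(c * (s - x))) := by
            exact mul_le_mul_of_nonneg_left key hpos.le
        _ = Real.exp (-c * s) := hmul
    have hcLb : c / Lb = c * (1 - s) := by rw [hs]; ring
    rw [hcLb]
    nlinarith [h2]
  · have hcLb : c * (1 - (1 - 1 / Lb)) = c / Lb := by ring
    rw [hcLb]; ring
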